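/- Let ρ ∈ (0,1] and ψ(ξ) = ξ^ρ on (0,∞). Define θ_λ = (1/π) ∫_0^1 (1/(1−ζ²)) log( ψ_λ(λ²/ζ²) / ψ_λ(λ²ζ²) ) dζ, where ψ_λ(ξ) = (1 − ξ/λ²)/(1 − ψ(ξ)/ψ(λ²)) (extended continuously at ξ = λ²). Then θ_λ = (1 − ρ)π/4 for every λ > 0. -/

import Mathlib

open Real MeasureTheory

/-- `ψ_λ(ξ) = (1 − ξ/λ²)/(1 − ψ(ξ)/ψ(λ²))`. -/
noncomputable def psiLam (ψ : ℝ → ℝ) (lam ξ : ℝ) : ℝ :=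
  (1 - ξ/lam^2) / (1 - ψ ξ / ψ (lam^2))

lemma aux_intervalIntegrable (n : ℕ) :
    IntervalIntegrable (fun x : ℝ => x ^ (2*n) * Real.log x) volume 0 1 := by
  rw [intervalIntegrable_iff_integrableOn_Ioc_of_le (by norm_num)]
  have hg : IntegrableOn (fun x : ℝ => 2 * x ^ (-(1/2) : ℝ)) (Set.Ioc 0 1) volume := by
    have := (intervalIntegral.intervalIntegrable_rpow' (a := 0) (b := 1)
      (r := -(1/2)) (by norm_num)).const_mul 2
    rwa [intervalIntegrable_iff_integrableOn_Ioc_of_le (by norm_num)] at this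
  refine Integrable.mono hg ?_ ?_
  · exact ((measurable_id.pow_const _).mul Real.measurable_log).aestronglyMeasurable
  · rw [ae_restrict_iff' measurableSet_Ioc]
    filter_upwards with x hx
    have hx0 : 0 < x := hx.1
    have hx1 : x ≤ 1 := hx.2
    have hlog : Real.log x ≤ 0 := Real.log_nonpos hx0.le hx1
    have hxp : (0:ℝ) ≤ x ^ (2*n) := by positivity
    have hxp1 : x ^ (2*n) ≤ 1 := pow_le_one₀ hx0.le hx1
    have hrp : (0:ℝ) < x ^ (-(1/2) : ℝ) := Real.rpow_pos_of_pos hx0 _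
    have hlb : -Real.log x ≤ 2 * x ^ (-(1/2) : ℝ) := by
      have h1 : Real.log (x ^ (-(1/2) : ℝ)) ≤ x ^ (-(1/2) : ℝ) - 1 :=
        Real.log_le_sub_one_of_pos hrp
      rw [Real.log_rpow hx0] at h1
      nlinarith
    rw [Real.norm_eq_abs, Real.norm_eq_abs,
      abs_of_nonpos (mul_nonpos_of_nonneg_of_nonpos hxp hlog), abs_of_pos (by positivity)]
    calc -(x ^ (2*n) * Real.log x) = x ^ (2*n) * (-Real.log x) := by ring
      _ ≤ 1 * (2 * x ^ (-(1/2) : ℝ)) := by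
          apply mul_le_mul hxp1 hlb (by linarith) (by norm_num)
      _ = 2 * x ^ (-(1/2) : ℝ) := by ring

lemma aux_integral_pow_mul_log (n : ℕ) :
    ∫ x in (0:ℝ)..1, x ^ (2*n) * Real.log x = -(1/(2*(n:ℝ)+1)^2) := by
  set c : ℝ := 2*(n:ℝ)+1 with hc
  have hc0 : (0:ℝ) < c := by positivity
  set F : ℝ → ℝ := fun x => x ^ (2*n+1) * Real.log x / c - x ^ (2*n+1) / c^2 with hF
  have hderiv : ∀ x ∈ Set.Ioo (0:ℝ) 1, HasDerivAt F (x ^ (2*n) * Real.log x) x := by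
    intro x hx
    have hx0 : (0:ℝ) < x := hx.1
    have h1 : HasDerivAt (fun y : ℝ => y ^ (2*n+1)) ((2*(n:ℝ)+1) * x ^ (2*n)) x := by
      have := hasDerivAt_pow (2*n+1) x
      refine this.congr_deriv ?_
      push_cast
      ring
    have h2 : HasDerivAt Real.log x⁻¹ x := Real.hasDerivAt_log hx0.ne'
    have h3 := ((h1.mul h2).div_const c).sub (h1.div_const (c^2))
    refine h3.congr_deriv ?_
    field_simp
    ring
  have h0 : Filter.Tendsto F (nhdsWithin 0 (Set.Ioi 0)) (nhds 0) := by
    have t1 : Filter.Tendsto (fun x : ℝ => Real.log x * x ^ ((2*(n:ℝ)+1) : ℝ))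
        (nhdsWithin 0 (Set.Ioi 0)) (nhds 0) :=
      tendsto_log_mul_rpow_nhdsGT_zero (by positivity)
    have t1' : Filter.Tendsto (fun x : ℝ => x ^ (2*n+1) * Real.log x)
        (nhdsWithin 0 (Set.Ioi 0)) (nhds 0) := by
      refine t1.congr' ?_
      filter_upwards [self_mem_nhdsWithin] with x (hx : (0:ℝ) < x)
      rw [← Real.rpow_natCast x (2*n+1)]
      push_cast
      ring
    have t2 : Filter.Tendsto (fun x : ℝ => x ^ (2*n+1))
        (nhdsWithin 0 (Set.Ioi 0)) (nhds 0) := by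
      have := (continuous_pow (2*n+1)).tendsto (0:ℝ)
      rw [zero_pow (by omega)] at this
      exact this.mono_left nhdsWithin_le_nhds
    have := (t1'.div_const c).sub (t2.div_const (c^2))
    simpa using this
  have h1 : Filter.Tendsto F (nhdsWithin 1 (Set.Iio 1)) (nhds (-(1/c^2))) := by
    have hcont : ContinuousAt F 1 := by
      apply ContinuousAt.sub
      · exact (((continuous_pow (2*n+1)).continuousAt).mul
          (Real.continuousAt_log one_ne_zero)).div_const c
      · exact ((continuous_pow (2*n+1)).continuousAt).div_const (c^2)
    have : F 1 = -(1/c^2) := by simp [hF]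
    rw [← this]
    exact hcont.continuousWithinAt.tendsto
  have := intervalIntegral.integral_eq_sub_of_hasDerivAt_of_tendsto (by norm_num : (0:ℝ) < 1)
    hderiv (aux_intervalIntegrable n) h0 h1
  rw [this]
  ring

lemma aux_odd_hasSum : HasSum (fun n : ℕ => 1/(2*(n:ℝ)+1)^2) (π^2/8) := by
  have hS : HasSum (fun n : ℕ => (1:ℝ) / (n:ℝ)^2) (π^2/6) := hasSum_zeta_two
  have he : HasSum (fun k : ℕ => (1:ℝ) / ((2*k : ℕ):ℝ)^2) (π^2/24) := by
    have := hS.mul_left (1/4)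
    have heq : (fun n : ℕ => (1/4) * ((1:ℝ)/(n:ℝ)^2)) =
        (fun k : ℕ => (1:ℝ) / ((2*k : ℕ):ℝ)^2) := by
      funext k
      push_cast
      rw [mul_pow, one_div_mul_one_div]
      norm_num
    rw [heq] at this
    have h24 : (1/4 : ℝ) * (π^2/6) = π^2/24 := by ring
    rwa [h24] at this
  have hsucc : Summable (fun k : ℕ => (1:ℝ) / ((k:ℝ)+1)^2) := by
    have := hS.summable.comp_injective Nat.succ_injective
    refine this.congr fun k => ?_
    simp [Function.comp, Nat.succ_eq_add_one]
  have hosum : Summable (fun k : ℕ => (1:ℝ)/(2*(k:ℝ)+1)^2) := by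
    refine Summable.of_nonneg_of_le (fun k => by positivity) (fun k => ?_) hsucc
    apply one_div_le_one_div_of_le (by positivity)
    nlinarith [sq_nonneg ((k:ℝ)), Nat.cast_nonneg (α := ℝ) k]
  obtain ⟨T, hT⟩ := hosum
  have hfun : (fun k : ℕ => (1:ℝ)/((2*k+1:ℕ):ℝ)^2) = (fun k : ℕ => (1:ℝ)/(2*(k:ℝ)+1)^2) := by
    funext k; push_cast; ring
  have ho : HasSum (fun k : ℕ => (1:ℝ) / ((2*k+1 : ℕ):ℝ)^2) T := by rw [hfun]; exact hT
  have hall : HasSum (fun n : ℕ => (1:ℝ) / (n:ℝ)^2) (π^2/24 + T) :=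
    HasSum.even_add_odd (f := fun n : ℕ => (1:ℝ)/(n:ℝ)^2) he ho
  have : π^2/6 = π^2/24 + T := hS.unique hall
  have hT8 : T = π^2/8 := by linarith
  rwa [hT8] at hT

lemma aux_intB : ∫ ζ in Set.Ioo (0:ℝ) 1, Real.log ζ / (1 - ζ^2) = -(π^2/8) := by
  have key : Set.EqOn (fun ζ : ℝ => Real.log ζ / (1 - ζ^2))
      (fun ζ : ℝ => ∑' n : ℕ, ζ ^ (2*n) * Real.log ζ) (Set.Ioo 0 1) := by
    intro ζ hζ
    have hs1 : ζ^2 < 1 := by nlinarith [hζ.1, hζ.2]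
    have : ∑' n : ℕ, ζ ^ (2*n) * Real.log ζ = (∑' n : ℕ, (ζ^2) ^ n) * Real.log ζ := by
      rw [tsum_mul_right]
      congr 1
      exact tsum_congr fun n => by rw [pow_mul]
    simp only [this, tsum_geometric_of_lt_one (by positivity) hs1]
    exact div_eq_inv_mul _ _
  rw [setIntegral_congr_fun measurableSet_Ioo key]
  have hint : ∀ n : ℕ, IntegrableOn (fun ζ : ℝ => ζ ^ (2*n) * Real.log ζ)
      (Set.Ioo 0 1) volume := by
    intro n
    have := (aux_intervalIntegrable n)
    rw [intervalIntegrable_iff_integrableOn_Ioc_of_le (by norm_num)] at this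
    exact this.mono_set Set.Ioo_subset_Ioc_self
  have hIoo : ∀ n : ℕ, ∫ ζ in Set.Ioo (0:ℝ) 1, ζ ^ (2*n) * Real.log ζ
      = -(1/(2*(n:ℝ)+1)^2) := by
    intro n
    rw [← MeasureTheory.integral_Ioc_eq_integral_Ioo,
      ← intervalIntegral.integral_of_le (by norm_num : (0:ℝ) ≤ 1)]
    exact aux_integral_pow_mul_log n
  have hmeas : ∀ n : ℕ, AEStronglyMeasurable (fun ζ : ℝ => ζ ^ (2*n) * Real.log ζ)
      (volume.restrict (Set.Ioo 0 1)) :=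
    fun n => ((measurable_id.pow_const _).mul Real.measurable_log).aestronglyMeasurable
  have hnormint : ∀ n : ℕ, ∫ ζ in Set.Ioo (0:ℝ) 1, ‖ζ ^ (2*n) * Real.log ζ‖
      = 1/(2*(n:ℝ)+1)^2 := by
    intro n
    have : Set.EqOn (fun ζ : ℝ => ‖ζ ^ (2*n) * Real.log ζ‖)
        (fun ζ : ℝ => -(ζ ^ (2*n) * Real.log ζ)) (Set.Ioo 0 1) := by
      intro ζ hζ
      have h1 : Real.log ζ ≤ 0 := Real.log_nonpos hζ.1.le hζ.2.le
      have h2 : (0:ℝ) ≤ ζ ^ (2*n) := pow_nonneg hζ.1.le _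
      simp only [Real.norm_eq_abs]
      exact abs_of_nonpos (mul_nonpos_of_nonneg_of_nonpos h2 h1)
    rw [setIntegral_congr_fun measurableSet_Ioo this, integral_neg, hIoo n]
    ring
  have hsum' : (∑' n : ℕ, ∫⁻ ζ in Set.Ioo (0:ℝ) 1, ‖ζ ^ (2*n) * Real.log ζ‖₊) ≠ ⊤ := by
    have heach : ∀ n : ℕ, (∫⁻ ζ in Set.Ioo (0:ℝ) 1, ‖ζ ^ (2*n) * Real.log ζ‖₊)
        = ENNReal.ofReal (1/(2*(n:ℝ)+1)^2) := by
      intro n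
      simp only [← enorm_eq_nnnorm]
      rw [← MeasureTheory.ofReal_integral_norm_eq_lintegral_enorm (hint n), hnormint n]
    simp_rw [heach]
    rw [← ENNReal.ofReal_tsum_of_nonneg (fun n => by positivity) aux_odd_hasSum.summable]
    exact ENNReal.ofReal_ne_top
  rw [MeasureTheory.integral_tsum hmeas hsum']
  simp_rw [hIoo]
  exact (aux_odd_hasSum.neg.tsum_eq).trans rfl

theorem stmt16 (ρ : ℝ) (hρ : ρ ∈ Set.Ioc (0:ℝ) 1) (lam : ℝ) (hlam : 0 < lam) :
    (1/π) * ∫ ζ in Set.Ioo (0:ℝ) 1,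
        (1/(1-ζ^2)) * Real.log (psiLam (fun ξ => ξ^ρ) lam (lam^2/ζ^2) /
          psiLam (fun ξ => ξ^ρ) lam (lam^2*ζ^2))
      = (1-ρ)*π/4 := by
  have hpoint : Set.EqOn
      (fun ζ : ℝ => (1/(1-ζ^2)) * Real.log (psiLam (fun ξ => ξ^ρ) lam (lam^2/ζ^2) /
          psiLam (fun ξ => ξ^ρ) lam (lam^2*ζ^2)))
      (fun ζ : ℝ => (2*(ρ-1)) * (Real.log ζ / (1 - ζ^2))) (Set.Ioo 0 1) := by
    intro ζ hζ
    have hζ0 : (0:ℝ) < ζ := hζ.1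
    have hζ1 : ζ < 1 := hζ.2
    have hs0 : (0:ℝ) < ζ^2 := by positivity
    have hs1 : ζ^2 < 1 := by nlinarith
    have ht0 : (0:ℝ) < (ζ^2)^ρ := Real.rpow_pos_of_pos hs0 ρ
    have ht1 : (ζ^2)^ρ < 1 := Real.rpow_lt_one hs0.le hs1 hρ.1
    have hl2 : (0:ℝ) < lam^2 := by positivity
    have hlρ : (0:ℝ) < (lam^2)^ρ := Real.rpow_pos_of_pos hl2 ρ
    have h1s : (1:ℝ) - ζ^2 ≠ 0 := by nlinarith
    have h1t : (1:ℝ) - (ζ^2)^ρ ≠ 0 := by nlinarith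
    have h1s' : (1:ℝ) - 1/ζ^2 ≠ 0 := by
      have := one_lt_one_div hs0 hs1
      linarith
    have h1t' : (1:ℝ) - 1/(ζ^2)^ρ ≠ 0 := by
      have := one_lt_one_div ht0 ht1
      linarith
    have hA : psiLam (fun ξ => ξ^ρ) lam (lam^2/ζ^2)
        = (1 - 1/ζ^2)/(1 - 1/(ζ^2)^ρ) := by
      unfold psiLam
      simp only
      rw [Real.div_rpow hl2.le hs0.le]
      congr 1 <;> (field_simp; try ring)
    have hB : psiLam (fun ξ => ξ^ρ) lam (lam^2*ζ^2)
        = (1 - ζ^2)/(1 - (ζ^2)^ρ) := by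
      unfold psiLam
      simp only
      rw [Real.mul_rpow hl2.le hs0.le]
      congr 1 <;> (field_simp; try ring)
    have hAB : psiLam (fun ξ => ξ^ρ) lam (lam^2/ζ^2) /
        psiLam (fun ξ => ξ^ρ) lam (lam^2*ζ^2) = (ζ^2)^ρ / ζ^2 := by
      have hne : ζ^2 * ((ζ^2)^ρ - 1) * (1 - ζ^2) ≠ 0 :=
        mul_ne_zero (mul_ne_zero hs0.ne' (fun h => h1t (by linarith))) h1s
      rw [hA, hB]
      field_simp
      rw [div_eq_iff (fun h => h1t (by linarith))]
      ring
    simp only [hAB]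
    rw [Real.log_div ht0.ne' hs0.ne', Real.log_rpow hs0, Real.log_pow]
    push_cast
    ring
  rw [setIntegral_congr_fun measurableSet_Ioo hpoint, MeasureTheory.integral_const_mul,
    aux_intB]
  field_simp
  ring
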